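/- With the setup of the previous bound, the labeling that assigns id to every vertex in the component of Γ ∖ σ_min containing A and F to every vertex in the component containing B achieves Ω̃ = N|E| − |σ_min|(N − 1), hence attains the maximum of the face number. -/

import Mathlib

def numCycles {N : ℕ} (π : Equiv.Perm (Fin N)) : ℕ :=
  N - π.cycleType.sum + Multiset.card π.cycleType

/-- The face count `χ(π_u⁻¹ π_v)` of an unordered edge `{u, v}`. -/
def numCyclesLift {N : ℕ} {V : Type*} (π : V → Equiv.Perm (Fin N)) : Sym2 V → ℕ :=
  Sym2.lift ⟨fun u v => numCycles ((π u)⁻¹ * π v), fun u v => by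
    have h : (π v)⁻¹ * π u = ((π u)⁻¹ * π v)⁻¹ := by group
    show numCycles ((π u)⁻¹ * π v) = numCycles ((π v)⁻¹ * π u)
    rw [numCycles, numCycles, h, Equiv.Perm.cycleType_inv]⟩

/-- `σ` is an `A`–`B` edge cut: a set of edges of `G` such that every walk from
`A` to `B` uses an edge of `σ`. -/
def IsEdgeCut {V : Type*} (G : SimpleGraph V) (A B : Set V)
    (σ : Finset (Sym2 V)) : Prop :=
  ↑σ ⊆ G.edgeSet ∧ ∀ a ∈ A, ∀ b ∈ B, ∀ w : G.Walk a b, ∃ e ∈ w.edges, e ∈ σ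

/-- `σ` is a minimum `A`–`B` edge cut. -/
def IsMinEdgeCut {V : Type*} (G : SimpleGraph V) (A B : Set V)
    (σ : Finset (Sym2 V)) : Prop :=
  IsEdgeCut G A B σ ∧ ∀ σ' : Finset (Sym2 V), IsEdgeCut G A B σ' → σ.card ≤ σ'.card

open scoped Classical in
/-- The labeling assigning `id` to vertices reachable from `A` after deleting the
cut edges `σ`, and `F` to all other vertices. -/
noncomputable def cutLabel {V : Type*} {N : ℕ} (G : SimpleGraph V)
    (σ : Finset (Sym2 V)) (A : Set V) (F : Equiv.Perm (Fin N)) :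
    V → Equiv.Perm (Fin N) :=
  fun v => if ∃ a ∈ A, (G.deleteEdges ↑σ).Reachable a v then 1 else F

/-! ### Auxiliary theory: orbit counts of permutations and the Cayley triangle inequality -/

section PermAux

open Equiv Equiv.Perm

set_option linter.unusedSectionVars false

variable {α : Type*} [Fintype α] [DecidableEq α]

noncomputable instance orbFintype (f : Perm α) : Fintype (Quotient (SameCycle.setoid f)) :=
  @Quotient.fintype α _ (SameCycle.setoid f)
    (fun a b => (inferInstance : Decidable (f.SameCycle a b)))

/-- number of orbits of a permutation -/
noncomputable def orbCount (f : Perm α) : ℕ :=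
  Fintype.card (Quotient (SameCycle.setoid f))

lemma sameCycle_rec (p : Perm α) (r : α → α → Prop) (hr : Equivalence r)
    (hstep : ∀ a, r a (p a)) {a b : α} (h : p.SameCycle a b) : r a b := by
  have hn : ∀ (n : ℕ) (a : α), r a ((p ^ n) a) := by
    intro n
    induction n with
    | zero => intro a; simpa using hr.refl a
    | succ n ih =>
      intro a
      have h1 : (p ^ (n + 1)) a = (p ^ n) (p a) := by
        rw [pow_succ]
        rfl
      rw [h1]
      exact hr.trans (hstep a) (ih (p a))
  obtain ⟨k, hk⟩ := h
  cases k with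
  | ofNat n =>
    have h2 : (p ^ n) a = b := by rw [← hk]; norm_cast
    rw [← h2]; exact hn n a
  | negSucc n =>
    have h2 : (p ^ (n + 1)) b = a := by
      rw [← hk]
      have h3 : (p ^ (n+1) : Perm α) * (p ^ (Int.negSucc n) : Perm α) = 1 := by
        rw [← zpow_natCast, ← zpow_add]
        norm_num [Int.negSucc_eq]
      calc (p ^ (n+1)) ((p ^ (Int.negSucc n)) a)
          = ((p ^ (n+1) : Perm α) * (p ^ (Int.negSucc n) : Perm α)) a := rfl
        _ = a := by rw [h3]; rfl
    exact hr.symm (by rw [← h2]; exact hn (n+1) b)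

lemma sameCycle_eq_of_fixed {p : Perm α} {a b : α} (ha : p a = a) (h : p.SameCycle a b) :
    a = b := by
  refine sameCycle_rec p (fun u w => (u = a ↔ w = a)) ⟨fun _ => Iff.rfl,
    fun h => h.symm, fun h h' => h.trans h'⟩ (fun u => ?_) h |>.mp rfl |>.symm
  constructor
  · rintro rfl; exact ha
  · intro hu; exact p.injective (hu.trans ha.symm)

lemma orbCount_one : orbCount (1 : Perm α) = Fintype.card α := by
  refine le_antisymm (Fintype.card_le_of_surjective _ Quotient.mk''_surjective)
    (Fintype.card_le_of_injective (fun a => Quotient.mk'' a) ?_)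
  intro a b hab
  exact Equiv.Perm.sameCycle_one.mp (Quotient.exact' hab)

lemma orbCount_le_card (f : Perm α) : orbCount f ≤ Fintype.card α :=
  Fintype.card_le_of_surjective _ Quotient.mk''_surjective

lemma orbCount_pos [Nonempty α] (f : Perm α) : 1 ≤ orbCount f :=
  Fintype.card_pos_iff.mpr ⟨Quotient.mk'' (Classical.arbitrary α)⟩

/-- splitting: multiplying by `swap x (g x)` increases the orbit count. -/
lemma orbCount_split (g : Perm α) {x : α} (hx : g x ≠ x) :
    orbCount g + 1 ≤ orbCount (Equiv.swap x (g x) * g) := by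
  set h := Equiv.swap x (g x) * g with hh
  have key : ∀ a b : α, h.SameCycle a b → g.SameCycle a b := by
    intro a b hab
    refine sameCycle_rec h (g.SameCycle) (SameCycle.setoid g).iseqv (fun a => ?_) hab
    have hha : h a = Equiv.swap x (g x) (g a) := rfl
    rcases eq_or_ne (g a) x with h1 | h1
    · rw [hha, h1, swap_apply_left]
      exact Equiv.Perm.SameCycle.trans ⟨1, by simpa using h1⟩ ⟨1, rfl⟩
    · rcases eq_or_ne (g a) (g x) with h2 | h2
      · have : a = x := g.injective h2
        subst this
        rw [hha, h2, swap_apply_right]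
      · rw [hha, swap_apply_of_ne_of_ne h1 h2]
        exact ⟨1, rfl⟩
  have hfix : h x = x := by
    rw [hh, Equiv.Perm.mul_apply, swap_apply_right]
  have hne : ¬ h.SameCycle x (g x) := by
    intro hc
    exact hx (sameCycle_eq_of_fixed hfix hc).symm
  have hsurj : Function.Surjective
      (Quotient.map' id key : Quotient (SameCycle.setoid h) → Quotient (SameCycle.setoid g)) := by
    intro q
    induction q using Quotient.inductionOn' with
    | h a => exact ⟨Quotient.mk'' a, rfl⟩
  have hninj : ¬ Function.Injective
      (Quotient.map' id key : Quotient (SameCycle.setoid h) → Quotient (SameCycle.setoid g)) := by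
    intro hinj
    have : (Quotient.mk'' x : Quotient (SameCycle.setoid h)) = Quotient.mk'' (g x) := by
      apply hinj
      have : g.SameCycle x (g x) := ⟨1, rfl⟩
      exact Quotient.sound' this
    exact hne (Quotient.exact' this)
  exact Fintype.card_lt_of_surjective_not_injective _ hsurj hninj

/-- merging: multiplying by a transposition decreases orbit count by at most one. -/
lemma orbCount_merge (f : Perm α) {x y : α} (hxy : x ≠ y) :
    orbCount f ≤ orbCount (f * Equiv.swap x y) + 1 := by
  classical
  set h := f * Equiv.swap x y with hh
  set cond : α → Prop := fun a => f.SameCycle a x ∨ f.SameCycle a y with hcond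
  set r : α → α → Prop := fun a b => f.SameCycle a b ∨ (cond a ∧ cond b) with hr
  have hreq : Equivalence r := by
    constructor
    · intro a; exact Or.inl ⟨0, rfl⟩
    · rintro a b (hab | ⟨ha, hb⟩)
      · exact Or.inl hab.symm
      · exact Or.inr ⟨hb, ha⟩
    · rintro a b c (hab | ⟨ha, hb⟩) (hbc | ⟨hb', hc⟩)
      · exact Or.inl (hab.trans hbc)
      · exact Or.inr ⟨hb'.imp hab.trans hab.trans, hc⟩
      · exact Or.inr ⟨ha, hb.imp hbc.symm.trans hbc.symm.trans⟩
      · exact Or.inr ⟨ha, hc⟩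
  have key : ∀ a b : α, h.SameCycle a b → r a b := by
    intro a b hab
    refine sameCycle_rec h r hreq (fun a => ?_) hab
    have hha : h a = f (Equiv.swap x y a) := rfl
    rcases eq_or_ne a x with rfl | h1
    · refine Or.inr ⟨Or.inl ⟨0, rfl⟩, Or.inr ?_⟩
      rw [hha, swap_apply_left]
      exact ⟨-1, by simp⟩
    · rcases eq_or_ne a y with rfl | h2
      · refine Or.inr ⟨Or.inr ⟨0, rfl⟩, Or.inl ?_⟩
        rw [hha, swap_apply_right]
        exact ⟨-1, by simp⟩
      · rw [hha, swap_apply_of_ne_of_ne h1 h2]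
        exact Or.inl ⟨1, rfl⟩
  -- surjection from Quot(h) ⊕ Unit onto Quot(f)
  have hwd : ∀ (a b : α), h.SameCycle a b →
      (if cond a then Quotient.mk'' x else Quotient.mk'' a : Quotient (SameCycle.setoid f))
        = (if cond b then Quotient.mk'' x else Quotient.mk'' b) := by
    intro a b hab
    rcases key a b hab with hfab | ⟨ha, hb⟩
    · have : cond a ↔ cond b := by
        constructor
        · intro h'; exact h'.imp hfab.symm.trans hfab.symm.trans
        · intro h'; exact h'.imp hfab.trans hfab.trans
      by_cases hca : cond a
      · rw [if_pos hca, if_pos (this.mp hca)]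
      · rw [if_neg hca, if_neg (fun hcb => hca (this.mpr hcb))]
        exact Quotient.sound' hfab
    · rw [if_pos ha, if_pos hb]
  set m : Quotient (SameCycle.setoid h) ⊕ Unit → Quotient (SameCycle.setoid f) :=
    fun s => Sum.rec (fun q => q.liftOn'
        (fun a => if cond a then Quotient.mk'' x else Quotient.mk'' a) hwd)
      (fun _ => Quotient.mk'' y) s with hm
  have hmsurj : Function.Surjective m := by
    intro q
    induction q using Quotient.inductionOn' with
    | h b =>
      by_cases hby : f.SameCycle b y
      · exact ⟨Sum.inr ⟨⟩, Quotient.sound' hby.symm⟩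
      · by_cases hbx : f.SameCycle b x
        · refine ⟨Sum.inl (Quotient.mk'' b), ?_⟩
          simp only [hm, Quotient.liftOn'_mk'']
          rw [if_pos (Or.inl hbx)]
          exact Quotient.sound' hbx.symm
        · refine ⟨Sum.inl (Quotient.mk'' b), ?_⟩
          simp only [hm, Quotient.liftOn'_mk'']
          rw [if_neg (fun hc => hc.elim hbx hby)]
  have := Fintype.card_le_of_surjective m hmsurj
  simpa [orbCount] using this

/-- Cayley-distance triangle inequality in orbit-count form. -/
lemma orbCount_triangle (f g : Perm α) :
    orbCount f + orbCount g ≤ Fintype.card α + orbCount (f * g) := by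
  generalize hn : g.support.card = n
  induction n using Nat.strong_induction_on generalizing f g with
  | _ n IH =>
    rcases eq_or_ne g 1 with rfl | hg
    · rw [orbCount_one, mul_one, add_comm]
    · obtain ⟨x, hx⟩ : ∃ x, g x ≠ x := by
        by_contra h'
        push_neg at h'
        exact hg (Equiv.ext h')
      set g' := Equiv.swap x (g x) * g with hg'
      have hlt : g'.support.card < n := hn ▸ card_support_swap_mul hx
      have hIH := IH g'.support.card hlt (f * Equiv.swap x (g x)) g' rfl
      have hprod : f * Equiv.swap x (g x) * g' = f * g := by
        rw [hg', ← mul_assoc, mul_assoc f _ _, swap_mul_self, mul_one]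
      rw [hprod] at hIH
      have h1 : orbCount f ≤ orbCount (f * Equiv.swap x (g x)) + 1 :=
        orbCount_merge f (fun h => hx h.symm)
      have h2 : orbCount g + 1 ≤ orbCount g' := orbCount_split g hx
      omega

lemma orbCount_add_support (f : Perm α) :
    orbCount f + f.support.card = Fintype.card α + f.cycleFactorsFinset.card := by
  classical
  have hpt : ∀ c : {c : Perm α // c ∈ f.cycleFactorsFinset}, ∃ a, a ∈ c.1.support :=
    fun c => IsCycle.nonempty_support (mem_cycleFactorsFinset_iff.mp c.2).1
  set pt : {c : Perm α // c ∈ f.cycleFactorsFinset} → α := fun c => (hpt c).choose with hptdef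
  have hpt_mem : ∀ c : {c : Perm α // c ∈ f.cycleFactorsFinset}, pt c ∈ c.1.support :=
    fun c => (hpt c).choose_spec
  set Φ : {x : α // f x = x} ⊕ {c : Perm α // c ∈ f.cycleFactorsFinset} →
      Quotient (SameCycle.setoid f) :=
    fun s => Sum.rec (fun x => Quotient.mk'' x.1) (fun c => Quotient.mk'' (pt c)) s with hΦ
  have hptsupp : ∀ c : {c : Perm α // c ∈ f.cycleFactorsFinset}, pt c ∈ f.support := fun c =>
    mem_cycleFactorsFinset_support_le c.2 (hpt_mem c)
  have hinj : Function.Injective Φ := by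
    rintro (⟨x, hx⟩ | ⟨c, hc⟩) (⟨x', hx'⟩ | ⟨c', hc'⟩) h
    · have := sameCycle_eq_of_fixed hx (Quotient.exact' h)
      simp [this]
    · exfalso
      have := sameCycle_eq_of_fixed hx (Quotient.exact' h)
      have h2 := hptsupp ⟨c', hc'⟩
      rw [← this] at h2
      exact (Equiv.Perm.mem_support.mp h2) hx
    · exfalso
      have := sameCycle_eq_of_fixed hx' (Quotient.exact' h).symm
      have h2 := hptsupp ⟨c, hc⟩
      rw [← this] at h2
      exact (Equiv.Perm.mem_support.mp h2) hx'
    · have hsc : f.SameCycle (pt ⟨c, hc⟩) (pt ⟨c', hc'⟩) := Quotient.exact' h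
      have e1 : c = f.cycleOf (pt ⟨c, hc⟩) := cycle_is_cycleOf (hpt_mem ⟨c, hc⟩) hc
      have e2 : c' = f.cycleOf (pt ⟨c', hc'⟩) := cycle_is_cycleOf (hpt_mem ⟨c', hc'⟩) hc'
      have : c = c' := by rw [e1, e2, hsc.cycleOf_eq]
      simp [this]
  have hsurj : Function.Surjective Φ := by
    intro q
    induction q using Quotient.inductionOn' with
    | h a =>
      by_cases ha : f a = a
      · exact ⟨Sum.inl ⟨a, ha⟩, rfl⟩
      · have hmem : f.cycleOf a ∈ f.cycleFactorsFinset :=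
          cycleOf_mem_cycleFactorsFinset_iff.mpr (Equiv.Perm.mem_support.mpr ha)
        refine ⟨Sum.inr ⟨f.cycleOf a, hmem⟩, ?_⟩
        have h2 := hpt_mem ⟨f.cycleOf a, hmem⟩
        have h3 : f.SameCycle a (pt ⟨f.cycleOf a, hmem⟩) :=
          (mem_support_cycleOf_iff.mp h2).1
        exact Quotient.sound' h3.symm
  have hcard : Fintype.card ({x : α // f x = x} ⊕ {c : Perm α // c ∈ f.cycleFactorsFinset})
      = orbCount f := Fintype.card_of_bijective ⟨hinj, hsurj⟩
  rw [Fintype.card_sum, Fintype.card_coe] at hcard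
  have hfix : Fintype.card {x : α // f x = x} = Fintype.card α - f.support.card := by
    rw [Fintype.card_subtype]
    have : Finset.filter (fun x => f x = x) Finset.univ = f.supportᶜ := by
      ext z
      simp [Equiv.Perm.mem_support]
    rw [this, Finset.card_compl]
  rw [hfix] at hcard
  have := f.support.card_le_univ
  omega

end PermAux

/-! ### numCycles lemmas -/

section NumCyclesAux

open Equiv Equiv.Perm

lemma numCycles_eq_orbCount {N : ℕ} (f : Perm (Fin N)) : numCycles f = orbCount f := by
  have h1 := orbCount_add_support f
  have h2 : Multiset.card f.cycleType = f.cycleFactorsFinset.card := by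
    rw [cycleType_def, Multiset.card_map]
    rfl
  have h3 := f.sum_cycleType
  have h4 : f.support.card ≤ N := by
    simpa using f.support.card_le_univ
  rw [Fintype.card_fin] at h1
  rw [numCycles, h3, h2]
  omega

lemma numCycles_triangle {N : ℕ} (f g : Perm (Fin N)) :
    numCycles f + numCycles g ≤ N + numCycles (f * g) := by
  have h := orbCount_triangle f g
  rw [Fintype.card_fin] at h
  rw [numCycles_eq_orbCount, numCycles_eq_orbCount, numCycles_eq_orbCount]
  exact h

lemma numCycles_le {N : ℕ} (f : Perm (Fin N)) : numCycles f ≤ N := by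
  rw [numCycles_eq_orbCount]
  simpa using orbCount_le_card f

lemma numCycles_pos {N : ℕ} (hN : 0 < N) (f : Perm (Fin N)) : 1 ≤ numCycles f := by
  rw [numCycles_eq_orbCount]
  have : Nonempty (Fin N) := ⟨⟨0, hN⟩⟩
  exact orbCount_pos f

lemma numCycles_one {N : ℕ} : numCycles (1 : Perm (Fin N)) = N := by
  simp [numCycles, cycleType_one]

lemma numCycles_inv {N : ℕ} (f : Perm (Fin N)) : numCycles f⁻¹ = numCycles f := by
  rw [numCycles, numCycles, Equiv.Perm.cycleType_inv]

end NumCyclesAux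

/-! ### Graph auxiliary lemma -/

lemma walk_exists_cross {V : Type*} {G : SimpleGraph V} (p : V → Prop) :
    ∀ {a b : V} (w : G.Walk a b), p a → ¬ p b →
      ∃ u v, G.Adj u v ∧ s(u, v) ∈ w.edges ∧ p u ∧ ¬ p v := by
  intro a b w
  induction w with
  | nil => intro ha hb; exact absurd ha hb
  | @cons a c b hadj w ih =>
    intro ha hb
    by_cases hc : p c
    · obtain ⟨u, v, h1, h2, h3, h4⟩ := ih hc hb
      exact ⟨u, v, h1, by simp [SimpleGraph.Walk.edges_cons, h2], h3, h4⟩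
    · exact ⟨a, c, hadj, by simp [SimpleGraph.Walk.edges_cons], ha, hc⟩

/-- the labeling assigning `id` to every vertex in the component of
`Γ ∖ σ_min` connected to `A` and the `N`-cycle `F` to every other vertex (in
particular the component connected to `B`) achieves
`Ω̃ = N|E| − |σ_min|(N − 1)`, hence attains the maximum of the face number among
all labelings satisfying the boundary conditions. -/
theorem faceNumber_cutLabel_max {V : Type*} [Fintype V] [DecidableEq V]
    (G : SimpleGraph V) [DecidableRel G.Adj] (hconn : G.Connected)
    (A B : Set V) (hdisj : Disjoint A B) (hA : A.Nonempty) (hB : B.Nonempty)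
    (N : ℕ) (F : Equiv.Perm (Fin N))
    (hF : F.IsCycle ∧ F.support = Finset.univ)
    (σmin : Finset (Sym2 V)) (hσ : IsMinEdgeCut G A B σmin) :
    ∑ e ∈ G.edgeFinset, numCyclesLift (cutLabel G σmin A F) e
        = N * G.edgeFinset.card - σmin.card * (N - 1) ∧
    ∀ π : V → Equiv.Perm (Fin N),
      (∀ v ∈ A, π v = 1) → (∀ v ∈ B, π v = F) →
      ∑ e ∈ G.edgeFinset, numCyclesLift π e
        ≤ ∑ e ∈ G.edgeFinset, numCyclesLift (cutLabel G σmin A F) e := by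
  classical
  obtain ⟨⟨hsub, hwalkcut⟩, hmin⟩ := hσ
  have hN : 0 < N := by
    obtain ⟨x0, -, -⟩ := hF.1
    exact x0.pos
  have hFnum : numCycles F = 1 := by
    rw [numCycles, hF.1.cycleType, hF.2]
    simp
  have hlab1 : ∀ v, (∃ a ∈ A, (G.deleteEdges ↑σmin).Reachable a v) →
      cutLabel G σmin A F v = 1 := by
    intro v hv
    simp only [cutLabel]
    rw [if_pos hv]
  have hlab2 : ∀ v, ¬ (∃ a ∈ A, (G.deleteEdges ↑σmin).Reachable a v) →
      cutLabel G σmin A F v = F := by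
    intro v hv
    simp only [cutLabel]
    rw [if_neg hv]
  set R : V → Prop := fun v => ∃ a ∈ A, (G.deleteEdges ↑σmin).Reachable a v with hRdef
  have hRA : ∀ a ∈ A, R a := fun a ha => ⟨a, ha, SimpleGraph.Reachable.refl a⟩
  have hRB : ∀ b ∈ B, ¬ R b := by
    rintro b hb ⟨a, ha, hreach⟩
    obtain ⟨w⟩ := hreach
    have hw : ∀ e ∈ w.edges, e ∈ G.edgeSet := by
      intro e he
      have h1 := w.edges_subset_edgeSet he
      rw [SimpleGraph.edgeSet_deleteEdges] at h1
      exact h1.1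
    obtain ⟨e, he, heσ⟩ := hwalkcut a ha b hb (w.transfer G hw)
    rw [SimpleGraph.Walk.edges_transfer] at he
    have h1 := w.edges_subset_edgeSet he
    rw [SimpleGraph.edgeSet_deleteEdges] at h1
    exact h1.2 heσ
  set cross : Sym2 V → Prop :=
    Sym2.lift ⟨fun u v => (R u ∧ ¬ R v) ∨ (R v ∧ ¬ R u),
      fun u v => propext or_comm⟩ with hcrossdef
  have hcross_mk : ∀ u v : V, cross s(u, v) ↔ ((R u ∧ ¬ R v) ∨ (R v ∧ ¬ R u)) := by
    intro u v
    simp [hcrossdef]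
  have hval : ∀ u v : V, G.Adj u v →
      numCyclesLift (cutLabel G σmin A F) s(u, v) = if cross s(u, v) then 1 else N := by
    intro u v _
    have hmk : numCyclesLift (cutLabel G σmin A F) s(u, v)
        = numCycles ((cutLabel G σmin A F u)⁻¹ * cutLabel G σmin A F v) := rfl
    by_cases hu : R u <;> by_cases hv : R v
    · rw [hmk, hlab1 u hu, hlab1 v hv,
        if_neg (fun hc => by rcases (hcross_mk u v).mp hc with ⟨_, h⟩ | ⟨_, h⟩ <;> exact h ‹_›)]
      simp [numCycles_one]
    · rw [hmk, hlab1 u hu, hlab2 v hv, if_pos ((hcross_mk u v).mpr (Or.inl ⟨hu, hv⟩))]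
      simpa using hFnum
    · rw [hmk, hlab2 u hu, hlab1 v hv, if_pos ((hcross_mk u v).mpr (Or.inr ⟨hv, hu⟩))]
      rw [mul_one, numCycles_inv]
      exact hFnum
    · rw [hmk, hlab2 u hu, hlab2 v hv,
        if_neg (fun hc => by rcases (hcross_mk u v).mp hc with ⟨h, _⟩ | ⟨h, _⟩ <;> exact ‹¬ _› h)]
      simp [numCycles_one]
  set D : Finset (Sym2 V) := G.edgeFinset.filter (fun e => cross e) with hDdef
  have hDsub : D ⊆ σmin := by
    intro e
    induction e using Sym2.ind with
    | _ u v =>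
      intro heD
      rw [hDdef, Finset.mem_filter, SimpleGraph.mem_edgeFinset, SimpleGraph.mem_edgeSet] at heD
      obtain ⟨hadj, hcr⟩ := heD
      by_contra heσ
      have hadj' : (G.deleteEdges ↑σmin).Adj u v := by
        rw [SimpleGraph.deleteEdges_adj]
        exact ⟨hadj, by simpa using heσ⟩
      rw [hcross_mk] at hcr
      rcases hcr with ⟨hu, hv⟩ | ⟨hv, hu⟩
      · exact hv (by obtain ⟨a, ha, hr⟩ := hu; exact ⟨a, ha, hr.trans hadj'.reachable⟩)
      · exact hu (by obtain ⟨a, ha, hr⟩ := hv; exact ⟨a, ha, hr.trans hadj'.symm.reachable⟩)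
  have hDcut : IsEdgeCut G A B D := by
    constructor
    · intro e he
      rw [Finset.mem_coe, hDdef, Finset.mem_filter] at he
      exact SimpleGraph.mem_edgeFinset.mp he.1
    · intro a ha b hb w
      obtain ⟨u, v, hadj, hmem, hu, hv⟩ := walk_exists_cross R w (hRA a ha) (hRB b hb)
      refine ⟨s(u, v), hmem, ?_⟩
      rw [hDdef, Finset.mem_filter]
      exact ⟨SimpleGraph.mem_edgeFinset.mpr (w.edges_subset_edgeSet hmem),
        (hcross_mk u v).mpr (Or.inl ⟨hu, hv⟩)⟩
  have hDeq : D = σmin := Finset.eq_of_subset_of_card_le hDsub (hmin D hDcut)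
  have hcards : σmin.card ≤ G.edgeFinset.card := by
    rw [← hDeq, hDdef]
    exact Finset.card_le_card (Finset.filter_subset _ _)
  have part1 : ∑ e ∈ G.edgeFinset, numCyclesLift (cutLabel G σmin A F) e
      = N * G.edgeFinset.card - σmin.card * (N - 1) := by
    have hs : ∑ e ∈ G.edgeFinset, numCyclesLift (cutLabel G σmin A F) e
        = ∑ e ∈ G.edgeFinset, (if cross e then 1 else N) := by
      refine Finset.sum_congr rfl ?_
      intro e he
      revert he
      induction e using Sym2.ind with
      | _ u v =>
        intro he
        exact hval u v ((G.mem_edgeSet).mp (SimpleGraph.mem_edgeFinset.mp he))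
    rw [hs, Finset.sum_ite, Finset.sum_const, Finset.sum_const, smul_eq_mul, smul_eq_mul,
      mul_one]
    have hf1 : (G.edgeFinset.filter (fun e => cross e)).card = σmin.card := by
      rw [← hDdef, hDeq]
    have hf2 : (G.edgeFinset.filter (fun e => ¬ cross e)).card
        = G.edgeFinset.card - σmin.card := by
      have h3 := Finset.card_filter_add_card_filter_not
        (s := G.edgeFinset) (p := fun e => cross e)
      omega
    rw [hf1, hf2]
    obtain ⟨M, rfl⟩ : ∃ M, N = M + 1 := ⟨N - 1, by omega⟩
    obtain ⟨k, hk⟩ : ∃ k, G.edgeFinset.card = σmin.card + k := ⟨_, (by omega : G.edgeFinset.card = σmin.card + (G.edgeFinset.card - σmin.card))⟩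
    rw [hk]
    have hsimp : σmin.card + k - σmin.card = k := by omega
    rw [hsimp]
    have hMsimp : M + 1 - 1 = M := by omega
    rw [hMsimp]
    have : (M + 1) * (σmin.card + k) = (σmin.card + k * (M + 1)) + σmin.card * M := by ring
    omega
  refine ⟨part1, ?_⟩
  intro π hπA hπB
  set h : V → ℕ := fun v => N - numCycles (π v) with hhdef
  have hnle : ∀ v, numCycles (π v) ≤ N := fun v => numCycles_le _
  have hnpos : ∀ v, 1 ≤ numCycles (π v) := fun v => numCycles_pos hN _
  have hhle : ∀ v, h v ≤ N - 1 := by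
    intro v
    have h1 := hnpos v
    simp only [hhdef]
    omega
  have hhA : ∀ a ∈ A, h a = 0 := by
    intro a ha
    simp only [hhdef, hπA a ha, numCycles_one]
    omega
  have hhB : ∀ b ∈ B, h b = N - 1 := by
    intro b hb
    simp only [hhdef, hπB b hb, hFnum]
  set Δ : Sym2 V → ℕ :=
    Sym2.lift ⟨fun u v => (h u - h v) + (h v - h u), fun u v => by dsimp only; omega⟩ with hΔdef
  have hΔmk : ∀ u v : V, Δ s(u, v) = (h u - h v) + (h v - h u) := by
    intro u v
    simp [hΔdef]
  have hedge : ∀ u v : V, numCyclesLift π s(u, v) + Δ s(u, v) ≤ N := by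
    intro u v
    have hmk1 : numCyclesLift π s(u, v) = numCycles ((π u)⁻¹ * π v) := rfl
    have t1 := numCycles_triangle (π u) ((π u)⁻¹ * π v)
    rw [mul_inv_cancel_left] at t1
    have t2 := numCycles_triangle (π v) ((π v)⁻¹ * π u)
    rw [mul_inv_cancel_left] at t2
    have hinv : numCycles ((π v)⁻¹ * π u) = numCycles ((π u)⁻¹ * π v) := by
      have hre : (π v)⁻¹ * π u = ((π u)⁻¹ * π v)⁻¹ := by group
      rw [hre, numCycles_inv]
    rw [hinv] at t2
    have l1 := hnle u
    have l2 := hnle v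
    rw [hmk1, hΔmk]
    simp only [hhdef]
    omega
  set cr : ℕ → Sym2 V → Prop := fun t => Sym2.lift
    ⟨fun u v => (h u < t ∧ t ≤ h v) ∨ (h v < t ∧ t ≤ h u),
      fun u v => propext or_comm⟩ with hcrdef
  have hcr_mk : ∀ (t : ℕ) (u v : V),
      cr t s(u, v) ↔ ((h u < t ∧ t ≤ h v) ∨ (h v < t ∧ t ≤ h u)) := by
    intro t u v
    simp [hcrdef]
  have hcut_t : ∀ t, 1 ≤ t → t < N →
      σmin.card ≤ (G.edgeFinset.filter (fun e => cr t e)).card := by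
    intro t ht1 ht2
    refine hmin _ ⟨?_, ?_⟩
    · intro e he
      rw [Finset.mem_coe, Finset.mem_filter] at he
      exact SimpleGraph.mem_edgeFinset.mp he.1
    · intro a ha b hb w
      obtain ⟨u, v, hadj, hmem, hu, hv⟩ := walk_exists_cross (fun v => h v < t) w
        (by simp only [hhA a ha]; omega) (by simp only [hhB b hb]; omega)
      refine ⟨s(u, v), hmem, Finset.mem_filter.mpr
        ⟨SimpleGraph.mem_edgeFinset.mpr (w.edges_subset_edgeSet hmem),
          (hcr_mk t u v).mpr (Or.inl ⟨hu, not_lt.mp hv⟩)⟩⟩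
  have hcoarea : ∀ u v : V, Δ s(u, v) = ∑ t ∈ Finset.Ico 1 N, (if cr t s(u, v) then 1 else 0) := by
    intro u v
    have h1 := hhle u
    have h2 := hhle v
    rw [hΔmk]
    have hsum : ∑ t ∈ Finset.Ico 1 N, (if cr t s(u, v) then 1 else 0)
        = (Finset.filter (fun t => cr t s(u, v)) (Finset.Ico 1 N)).card :=
      (Finset.card_filter _ _).symm
    rw [hsum]
    rcases le_total (h u) (h v) with hle | hle
    · have hflt : Finset.filter (fun t => cr t s(u, v)) (Finset.Ico 1 N)
          = Finset.Ioc (h u) (h v) := by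
        ext t
        rw [Finset.mem_filter, Finset.mem_Ico, Finset.mem_Ioc, hcr_mk]
        omega
      rw [hflt, Nat.card_Ioc]
      omega
    · have hflt : Finset.filter (fun t => cr t s(u, v)) (Finset.Ico 1 N)
          = Finset.Ioc (h v) (h u) := by
        ext t
        rw [Finset.mem_filter, Finset.mem_Ico, Finset.mem_Ioc, hcr_mk]
        omega
      rw [hflt, Nat.card_Ioc]
      omega
  have hsum_le : (∑ e ∈ G.edgeFinset, numCyclesLift π e) + (∑ e ∈ G.edgeFinset, Δ e)
      ≤ N * G.edgeFinset.card := by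
    rw [← Finset.sum_add_distrib]
    calc ∑ e ∈ G.edgeFinset, (numCyclesLift π e + Δ e)
        ≤ ∑ _e ∈ G.edgeFinset, N := by
          refine Finset.sum_le_sum ?_
          intro e he
          revert he
          induction e using Sym2.ind with
          | _ u v => intro _; exact hedge u v
      _ = N * G.edgeFinset.card := by rw [Finset.sum_const, smul_eq_mul, mul_comm]
  have hTlow : (N - 1) * σmin.card ≤ ∑ e ∈ G.edgeFinset, Δ e := by
    have hT : ∑ e ∈ G.edgeFinset, Δ e
        = ∑ t ∈ Finset.Ico 1 N, (G.edgeFinset.filter (fun e => cr t e)).card := by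
      have e1 : ∑ e ∈ G.edgeFinset, Δ e
          = ∑ e ∈ G.edgeFinset, ∑ t ∈ Finset.Ico 1 N, (if cr t e then 1 else 0) := by
        refine Finset.sum_congr rfl ?_
        intro e he
        revert he
        induction e using Sym2.ind with
        | _ u v => intro _; exact hcoarea u v
      rw [e1, Finset.sum_comm]
      refine Finset.sum_congr rfl ?_
      intro t _
      exact (Finset.card_filter _ _).symm
    rw [hT]
    calc (N - 1) * σmin.card = ∑ _t ∈ Finset.Ico 1 N, σmin.card := by
          rw [Finset.sum_const, Nat.card_Ico, smul_eq_mul]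
      _ ≤ _ := Finset.sum_le_sum (fun t ht => by
          rw [Finset.mem_Ico] at ht
          exact hcut_t t ht.1 ht.2)
  rw [part1]
  calc (∑ e ∈ G.edgeFinset, numCyclesLift π e)
      ≤ N * G.edgeFinset.card - ∑ e ∈ G.edgeFinset, Δ e := Nat.le_sub_of_add_le hsum_le
    _ ≤ N * G.edgeFinset.card - (N - 1) * σmin.card := Nat.sub_le_sub_left hTlow _
    _ = N * G.edgeFinset.card - σmin.card * (N - 1) := by rw [mul_comm σmin.card]
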